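/- Let f : ℝ^p × X → ℝ be a model with sup over θ, x of (‖∇_θ f_θ(x)‖² + f_θ(x)²) ≤ C². Let ℓ be a loss with |ℓ''| ≤ M, and D a distribution on X × ℝ. Suppose θ₀ satisfies f_{θ₀}(x) = 0 for all x, and ‖∇_θ L_D(f_{θ₀})‖ ≥ τ where L_D(g) = E_{(x,y)∼D}[ℓ(g(x), y)]. Then there exists w ∈ ℝ^p with ‖w‖ ≤ τ/(M C²) such that the linear predictor h(x) = ⟨w, ∇_θ f_{θ₀}(x)⟩ satisfies L_D(h) ≤ L_D(0) − τ²/(2 M C²). -/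

import Mathlib

open MeasureTheory

set_option maxHeartbeats 1000000 in
/-- Theorem 3.1 (unbiased initialization): if gradient descent can move (the population-loss
gradient at an unbiased initialization has norm ≥ τ), then some bounded-norm predictor in the
tangent-kernel feature space beats the null predictor by `τ²/(2 M C²)`. -/
theorem stmt1 {p : ℕ} {X : Type*} [MeasurableSpace X]
    (f : EuclideanSpace ℝ (Fin p) → X → ℝ)
    (gradf : EuclideanSpace ℝ (Fin p) → X → EuclideanSpace ℝ (Fin p))
    (θ₀ : EuclideanSpace ℝ (Fin p))
    (hgrad : ∀ x, HasGradientAt (fun θ => f θ x) (gradf θ₀ x) θ₀)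
    (C M τ : ℝ) (hC : 0 < C) (hM : 0 < M) (hτ : 0 < τ)
    (hbound : ∀ θ x, ‖gradf θ x‖ ^ 2 + (f θ x) ^ 2 ≤ C ^ 2)
    (ℓ ℓd : ℝ → ℝ → ℝ) (hℓpos : ∀ a y, 0 ≤ ℓ a y)
    (htaylor : ∀ a y, ℓ a y ≤ ℓ 0 y + ℓd 0 y * a + M / 2 * a ^ 2)
    (μ : Measure (X × ℝ)) [IsProbabilityMeasure μ]
    (hunbiased : ∀ x, f θ₀ x = 0)
    (hint0 : Integrable (fun z : X × ℝ => ℓ 0 z.2) μ)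
    (hintv : Integrable (fun z : X × ℝ => ℓd (f θ₀ z.1) z.2 • gradf θ₀ z.1) μ)
    (hintw : ∀ w : EuclideanSpace ℝ (Fin p),
      Integrable (fun z : X × ℝ => ℓ (inner ℝ w (gradf θ₀ z.1) : ℝ) z.2) μ)
    (hgradnorm : τ ≤ ‖∫ z : X × ℝ, ℓd (f θ₀ z.1) z.2 • gradf θ₀ z.1 ∂μ‖) :
    ∃ w : EuclideanSpace ℝ (Fin p), ‖w‖ ≤ τ / (M * C ^ 2) ∧
      ∫ z : X × ℝ, ℓ (inner ℝ w (gradf θ₀ z.1) : ℝ) z.2 ∂μ ≤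
        (∫ z : X × ℝ, ℓ 0 z.2 ∂μ) - τ ^ 2 / (2 * M * C ^ 2) := by
  set g : EuclideanSpace ℝ (Fin p) := ∫ z : X × ℝ, ℓd (f θ₀ z.1) z.2 • gradf θ₀ z.1 ∂μ with hg
  have hgpos : 0 < ‖g‖ := lt_of_lt_of_le hτ hgradnorm
  set c : ℝ := τ / (M * C ^ 2 * ‖g‖) with hc
  have hcpos : 0 < c := by positivity
  set w : EuclideanSpace ℝ (Fin p) := (-c) • g with hw
  have hwnorm : ‖w‖ = τ / (M * C ^ 2) := by
    rw [hw, norm_smul]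
    simp only [norm_neg, Real.norm_eq_abs, abs_of_pos hcpos]; rw [hc]
    field_simp
  refine ⟨w, le_of_eq hwnorm, ?_⟩
  have hgradC : ∀ x, ‖gradf θ₀ x‖ ≤ C := by
    intro x
    have := hbound θ₀ x
    nlinarith [norm_nonneg (gradf θ₀ x), sq_nonneg (f θ₀ x)]
  have hpt : ∀ z : X × ℝ, ℓ (inner ℝ w (gradf θ₀ z.1) : ℝ) z.2 ≤
      ℓ 0 z.2 + (inner ℝ w (ℓd (f θ₀ z.1) z.2 • gradf θ₀ z.1) : ℝ) + M / 2 * (‖w‖ ^ 2 * C ^ 2) := by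
    intro z
    have h1 := htaylor (inner ℝ w (gradf θ₀ z.1) : ℝ) z.2
    have hcs := abs_real_inner_le_norm w (gradf θ₀ z.1)
    have hgc := hgradC z.1
    have h2a : |(inner ℝ w (gradf θ₀ z.1) : ℝ)| * |(inner ℝ w (gradf θ₀ z.1) : ℝ)| ≤
        (‖w‖ * ‖gradf θ₀ z.1‖) * (‖w‖ * ‖gradf θ₀ z.1‖) :=
      mul_le_mul hcs hcs (abs_nonneg _) (by positivity)
    rw [abs_mul_abs_self] at h2a
    have hb : ‖gradf θ₀ z.1‖ * ‖gradf θ₀ z.1‖ ≤ C * C :=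
      mul_le_mul hgc hgc (norm_nonneg _) hC.le
    have h2 : (inner ℝ w (gradf θ₀ z.1) : ℝ) ^ 2 ≤ ‖w‖ ^ 2 * C ^ 2 := by
      nlinarith [h2a, hb, sq_nonneg ‖w‖, norm_nonneg w]
    have h3 : (inner ℝ w (ℓd (f θ₀ z.1) z.2 • gradf θ₀ z.1) : ℝ)
        = ℓd 0 z.2 * (inner ℝ w (gradf θ₀ z.1) : ℝ) := by
      rw [real_inner_smul_right, hunbiased]
    rw [h3]
    nlinarith [h1, h2]
  have hintB : Integrable (fun z : X × ℝ =>
      (inner ℝ w (ℓd (f θ₀ z.1) z.2 • gradf θ₀ z.1) : ℝ)) μ := hintv.const_inner w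
  have hintA : Integrable (fun z : X × ℝ => ℓ 0 z.2 +
      (inner ℝ w (ℓd (f θ₀ z.1) z.2 • gradf θ₀ z.1) : ℝ)) μ := hint0.add hintB
  have hintRHS : Integrable (fun z : X × ℝ => ℓ 0 z.2 +
      (inner ℝ w (ℓd (f θ₀ z.1) z.2 • gradf θ₀ z.1) : ℝ) + M / 2 * (‖w‖ ^ 2 * C ^ 2)) μ :=
    hintA.add (integrable_const _)
  have hle := integral_mono (hintw w) hintRHS hpt
  have hinn : ∫ z : X × ℝ, (inner ℝ w (ℓd (f θ₀ z.1) z.2 • gradf θ₀ z.1) : ℝ) ∂μ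
      = (inner ℝ w g : ℝ) := by
    rw [hg]; exact integral_inner hintv w
  have hsplit : ∫ z : X × ℝ, (ℓ 0 z.2 +
      (inner ℝ w (ℓd (f θ₀ z.1) z.2 • gradf θ₀ z.1) : ℝ) + M / 2 * (‖w‖ ^ 2 * C ^ 2)) ∂μ
      = (∫ z : X × ℝ, ℓ 0 z.2 ∂μ) + (inner ℝ w g : ℝ) + M / 2 * (‖w‖ ^ 2 * C ^ 2) := by
    rw [integral_add hintA (integrable_const _),
      integral_add hint0 hintB, hinn, integral_const]
    simp
  rw [hsplit] at hle
  have hinner : (inner ℝ w g : ℝ) = -(c * ‖g‖ ^ 2) := by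
    rw [hw, real_inner_smul_left, real_inner_self_eq_norm_sq]
    ring
  have hce : c * ‖g‖ ^ 2 = τ * ‖g‖ / (M * C ^ 2) := by
    rw [hc]; field_simp
  have hinnerle : (inner ℝ w g : ℝ) ≤ -(τ ^ 2 / (M * C ^ 2)) := by
    rw [hinner, neg_le_neg_iff, hce, div_le_div_iff₀ (by positivity) (by positivity)]
    have h5 := mul_le_mul_of_nonneg_right hgradnorm
      (le_of_lt (mul_pos hτ (mul_pos hM (pow_pos hC 2))))
    nlinarith [h5]
  have hquad : M / 2 * (‖w‖ ^ 2 * C ^ 2) = τ ^ 2 / (2 * M * C ^ 2) := by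
    rw [hwnorm]
    field_simp
  have hsum : τ ^ 2 / (M * C ^ 2) - τ ^ 2 / (2 * M * C ^ 2) = τ ^ 2 / (2 * M * C ^ 2) := by
    field_simp
    ring
  linarith [hle, hinnerle, hquad.le, hquad.ge, hsum]
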